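/- For every integer m ≥ 1, every integer m_η with 0 ≤ m_η < m, every N ∈ ℕ and all constants c₀, c₁, λ > 0 and γ > m − m_η, there exists B₀ > 0 with the following property: for every design problem (𝒳, ℬ, f, ℓ, (ξ[β])_{β∈ℬ}) as in the context satisfying conditions (2.4/3.1) with constants c₁, γ, (2.5) with constant λ, and (2.9) with constant c₀, and such that in addition every local D-optimal design ξ[β] is supported at exactly m points each carrying weight 1/m, and there exist fixed points x̄₁,…,x̄_{m_η} ∈ 𝒳 belonging to the support of every ξ[β] (β ∈ ℬ), the following holds: if ℓ(β_max) − ℓ(β_min) ≥ B₀, then every design ξ* maximizing the standardized maximin D-criterion Φ over all designs is supported at more than N points. -/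

import Mathlib

open scoped BigOperators

/-- An approximate design: a finitely supported probability measure on `X`,
given by its support points and positive weights summing to one. -/
structure Design (X : Type*) where
  support : Finset X
  w : X → ℝ
  w_pos : ∀ x ∈ support, 0 < w x
  w_zero : ∀ x ∉ support, w x = 0
  sum_one : ∑ x ∈ support, w x = 1

/-- Information matrix `M(ξ,β) = ∑ₖ wₖ f(xₖ,β) f(xₖ,β)ᵀ`. -/
noncomputable def infoMat {X : Type*} {m : ℕ} (f : X → ℝ → Fin m → ℝ)
    (ξ : Design X) (β : ℝ) : Matrix (Fin m) (Fin m) ℝ :=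
  ∑ x ∈ ξ.support, ξ.w x • Matrix.vecMulVec (f x β) (f x β)

/-- `I_m(x₁,…,x_m,β) = det[f(x₁,β) ⋯ f(x_m,β)]²`. -/
noncomputable def detIm {X : Type*} {m : ℕ} (f : X → ℝ → Fin m → ℝ)
    (xs : Fin m → X) (β : ℝ) : ℝ :=
  (Matrix.det (Matrix.of fun i j => f (xs j) β i)) ^ 2

section Aux

open Classical

variable {X : Type} [Nonempty X]

lemma Design.w_nonneg (ξ : Design X) (x : X) : 0 ≤ ξ.w x := by
  by_cases h : x ∈ ξ.support
  · exact (ξ.w_pos x h).le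
  · rw [ξ.w_zero x h]

lemma Design.w_le_one (ξ : Design X) (x : X) : ξ.w x ≤ 1 := by
  by_cases h : x ∈ ξ.support
  · rw [← ξ.sum_one]
    exact Finset.single_le_sum (fun y hy => (ξ.w_pos y hy).le) h
  · rw [ξ.w_zero x h]; norm_num

/-- A canonical enumeration of a finset of (intended) cardinality `m`. -/
noncomputable def enumF (m : ℕ) (t : Finset X) : Fin m → X :=
  if h : t.card = m then fun i => ((t.equivFinOfCardEq h).symm i : X)
  else fun _ => Classical.arbitrary X

lemma enumF_mem {m : ℕ} {t : Finset X} (h : t.card = m) (i : Fin m) : enumF m t i ∈ t := by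
  simp only [enumF, dif_pos h]
  exact ((t.equivFinOfCardEq h).symm i).2

lemma enumF_inj {m : ℕ} {t : Finset X} (h : t.card = m) : Function.Injective (enumF m t) := by
  simp only [enumF, dif_pos h]
  exact fun a b hab => (t.equivFinOfCardEq h).symm.injective (Subtype.coe_injective hab)

lemma enumF_image {m : ℕ} {t : Finset X} (h : t.card = m) :
    Finset.image (enumF m t) Finset.univ = t := by
  apply Finset.eq_of_subset_of_card_le
  · exact Finset.image_subset_iff.mpr fun i _ => enumF_mem h i
  · rw [Finset.card_image_of_injective _ (enumF_inj h), Finset.card_univ, Fintype.card_fin, h]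

/-- The permutation relating an injective tuple to the canonical enumeration of its image. -/
noncomputable def permOfF (m : ℕ) (r : Fin m → X) : Equiv.Perm (Fin m) :=
  if h : Function.Injective r then
    (Equiv.ofBijective (fun i => (⟨r i, Finset.mem_image_of_mem r (Finset.mem_univ i)⟩ :
        (Finset.image r Finset.univ : Finset X)))
      ⟨fun a b hab => h (congrArg Subtype.val hab), fun y => by
        obtain ⟨i, -, hi⟩ := Finset.mem_image.mp y.2
        exact ⟨i, Subtype.ext hi⟩⟩).trans
      ((Finset.image r Finset.univ).equivFinOfCardEq
        (by rw [Finset.card_image_of_injective _ h, Finset.card_univ, Fintype.card_fin]))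
  else 1

lemma enumF_permOfF {m : ℕ} {r : Fin m → X} (h : Function.Injective r) (i : Fin m) :
    enumF m (Finset.image r Finset.univ) (permOfF m r i) = r i := by
  have hc : (Finset.image r Finset.univ).card = m := by
    rw [Finset.card_image_of_injective _ h, Finset.card_univ, Fintype.card_fin]
  simp only [enumF, permOfF, dif_pos h, dif_pos hc, Equiv.trans_apply, Equiv.symm_apply_apply]
  rfl

/-- Cauchy–Binet expansion for sums of rank-one matrices. -/
theorem det_sum_vecMulVec (m : ℕ) (s : Finset X) (w : X → ℝ) (v : X → Fin m → ℝ) :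
    (∑ x ∈ s, w x • Matrix.vecMulVec (v x) (v x)).det
      = ∑ t ∈ s.powersetCard m,
          (∏ x ∈ t, w x) * Matrix.det (Matrix.of fun i j => v (enumF m t i) j) ^ 2 := by
  have h1 : (∑ x ∈ s, w x • Matrix.vecMulVec (v x) (v x)).det
      = ∑ r ∈ Fintype.piFinset (fun _ : Fin m => s),
          (∏ i, (w (r i) * v (r i) i)) * Matrix.det (Matrix.of fun i j => v (r i) j) := by
    have hrow : (∑ x ∈ s, w x • Matrix.vecMulVec (v x) (v x))
        = fun i => ∑ x ∈ s, (w x * v x i) • v x := by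
      funext i j
      simp [Matrix.sum_apply, Matrix.vecMulVec_apply, Finset.sum_apply, mul_assoc]
    rw [hrow]
    show Matrix.detRowAlternating (fun i => ∑ x ∈ s, (w x * v x i) • v x) = _
    have hms := (Matrix.detRowAlternating (R := ℝ) (n := Fin m)).toMultilinearMap.map_sum_finset
        (fun i x => (w x * v x i) • v x) (fun _ => s)
    simp only [AlternatingMap.coe_multilinearMap] at hms
    rw [hms]
    refine Finset.sum_congr rfl fun r _ => ?_
    have hsm := (Matrix.detRowAlternating (R := ℝ) (n := Fin m)).toMultilinearMap.map_smul_univ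
        (fun i => w (r i) * v (r i) i) (fun i => v (r i))
    simp only [AlternatingMap.coe_multilinearMap] at hsm
    rw [hsm, smul_eq_mul]
    rfl
  rw [h1]
  have h2 : ∑ r ∈ Fintype.piFinset (fun _ : Fin m => s),
          (∏ i, (w (r i) * v (r i) i)) * Matrix.det (Matrix.of fun i j => v (r i) j)
      = ∑ r ∈ (Fintype.piFinset (fun _ : Fin m => s)).filter (fun r => Function.Injective r),
          (∏ i, (w (r i) * v (r i) i)) * Matrix.det (Matrix.of fun i j => v (r i) j) := by
    refine (Finset.sum_filter_of_ne fun r _ hne => ?_).symm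
    by_contra hinj
    obtain ⟨a, b, hab, hne'⟩ := Function.not_injective_iff.mp hinj
    exact hne (by rw [Matrix.det_zero_of_row_eq hne' (show (fun j => v (r a) j) = (fun j => v (r b) j) by rw [hab]), mul_zero])
  rw [h2]
  have h3 : ∑ r ∈ (Fintype.piFinset (fun _ : Fin m => s)).filter (fun r => Function.Injective r),
          (∏ i, (w (r i) * v (r i) i)) * Matrix.det (Matrix.of fun i j => v (r i) j)
      = ∑ p ∈ (s.powersetCard m) ×ˢ (Finset.univ : Finset (Equiv.Perm (Fin m))),
          (∏ i, (w ((enumF m p.1 ∘ p.2) i) * v ((enumF m p.1 ∘ p.2) i) i))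
            * Matrix.det (Matrix.of fun i j => v ((enumF m p.1 ∘ p.2) i) j) := by
    refine Finset.sum_nbij' (fun r => (Finset.image r Finset.univ, permOfF m r))
      (fun p => enumF m p.1 ∘ p.2) ?_ ?_ ?_ ?_ ?_
    · intro r hr
      simp only [Finset.mem_filter, Fintype.mem_piFinset] at hr
      obtain ⟨hmem, hinj⟩ := hr
      simp only [Finset.mem_product, Finset.mem_univ, and_true]
      exact Finset.mem_powersetCard.mpr ⟨Finset.image_subset_iff.mpr (fun i _ => hmem i),
        by rw [Finset.card_image_of_injective _ hinj, Finset.card_univ, Fintype.card_fin]⟩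
    · intro p hp
      simp only [Finset.mem_product] at hp
      obtain ⟨hsub, hcard⟩ := Finset.mem_powersetCard.mp hp.1
      simp only [Finset.mem_filter, Fintype.mem_piFinset]
      exact ⟨fun i => hsub (enumF_mem hcard _), (enumF_inj hcard).comp p.2.injective⟩
    · intro r hr
      have hinj : Function.Injective r := by
        simpa using (Finset.mem_filter.mp hr).2
      funext i
      exact enumF_permOfF hinj i
    · intro p hp
      simp only [Finset.mem_product] at hp
      obtain ⟨hsub, hcard⟩ := Finset.mem_powersetCard.mp hp.1
      have hinj : Function.Injective (enumF m p.1 ∘ p.2) := (enumF_inj hcard).comp p.2.injective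
      have himg : Finset.image (enumF m p.1 ∘ p.2) Finset.univ = p.1 := by
        rw [show enumF m p.1 ∘ p.2 = fun i => enumF m p.1 (p.2 i) from rfl]
        rw [show Finset.image (fun i => enumF m p.1 (p.2 i)) Finset.univ
            = Finset.image (enumF m p.1) (Finset.image p.2 Finset.univ) from
          (Finset.image_image).symm]
        rw [Finset.image_univ_equiv, enumF_image hcard]
      have hperm : permOfF m (enumF m p.1 ∘ p.2) = p.2 := by
        refine Equiv.ext fun i => enumF_inj hcard ?_
        have := enumF_permOfF hinj i
        rw [himg] at this
        exact this
      exact Prod.ext himg hperm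
    · intro r hr
      have hinj : Function.Injective r := by
        simpa using (Finset.mem_filter.mp hr).2
      have hre : enumF m (Finset.image r Finset.univ) ∘ permOfF m r = r :=
        funext fun i => enumF_permOfF hinj i
      rw [hre]
  rw [h3, Finset.sum_product]
  refine Finset.sum_congr rfl fun t ht => ?_
  obtain ⟨hsub, hcard⟩ := Finset.mem_powersetCard.mp ht
  have hw : ∀ σ : Equiv.Perm (Fin m), (∏ i, w (enumF m t (σ i))) = ∏ x ∈ t, w x := by
    intro σ
    have him := Finset.prod_image (f := w) (g := enumF m t) (s := Finset.univ)
      (fun a _ b _ hab => enumF_inj hcard hab)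
    rw [enumF_image hcard] at him
    rw [Equiv.prod_comp σ (fun i => w (enumF m t i))]
    exact him.symm
  have hdet : ∀ σ : Equiv.Perm (Fin m),
      Matrix.det (Matrix.of fun i j => v (enumF m t (σ i)) j)
      = ((Equiv.Perm.sign σ : ℤ) : ℝ) * Matrix.det (Matrix.of fun i j => v (enumF m t i) j) := by
    intro σ
    have := Matrix.det_permute σ (Matrix.of fun i j => v (enumF m t i) j)
    exact this
  calc ∑ σ : Equiv.Perm (Fin m),
        (∏ i, (w ((enumF m t ∘ σ) i) * v ((enumF m t ∘ σ) i) i))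
          * Matrix.det (Matrix.of fun i j => v ((enumF m t ∘ σ) i) j)
      = ∑ σ : Equiv.Perm (Fin m), (∏ x ∈ t, w x) *
          (Matrix.det (Matrix.of fun i j => v (enumF m t i) j) *
            (((Equiv.Perm.sign σ : ℤ) : ℝ) * ∏ i, v (enumF m t (σ i)) i)) := by
        refine Finset.sum_congr rfl fun σ _ => ?_
        rw [show (∏ i, (w ((enumF m t ∘ σ) i) * v ((enumF m t ∘ σ) i) i))
            = (∏ i, w (enumF m t (σ i))) * ∏ i, v (enumF m t (σ i)) i from
          Finset.prod_mul_distrib]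
        rw [hw σ, show Matrix.det (Matrix.of fun i j => v ((enumF m t ∘ σ) i) j)
            = ((Equiv.Perm.sign σ : ℤ) : ℝ) * Matrix.det (Matrix.of fun i j => v (enumF m t i) j)
          from hdet σ]
        ring
    _ = (∏ x ∈ t, w x) * (Matrix.det (Matrix.of fun i j => v (enumF m t i) j) *
          ∑ σ : Equiv.Perm (Fin m), ((Equiv.Perm.sign σ : ℤ) : ℝ) * ∏ i, v (enumF m t (σ i)) i) := by
        rw [← Finset.mul_sum, ← Finset.mul_sum]
    _ = (∏ x ∈ t, w x) * Matrix.det (Matrix.of fun i j => v (enumF m t i) j) ^ 2 := by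
        have hda : (∑ σ : Equiv.Perm (Fin m), ((Equiv.Perm.sign σ : ℤ) : ℝ) * ∏ i, v (enumF m t (σ i)) i)
            = Matrix.det (Matrix.of fun i j => v (enumF m t i) j) :=
          (Matrix.det_apply' (Matrix.of fun i j => v (enumF m t i) j)).symm
        rw [hda]
        ring

variable {m : ℕ} (f : X → ℝ → Fin m → ℝ)

lemma detIm_eq (xs : Fin m → X) (β : ℝ) :
    detIm f xs β = Matrix.det (Matrix.of fun i j => f (xs i) β j) ^ 2 := by
  rw [detIm, show (Matrix.of fun i j => f (xs j) β i)
      = (Matrix.of fun i j => f (xs i) β j).transpose from rfl, Matrix.det_transpose]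

lemma detIm_nonneg (xs : Fin m → X) (β : ℝ) : 0 ≤ detIm f xs β := by
  rw [detIm]; positivity

lemma infoMat_det_expand (ξ : Design X) (β : ℝ) :
    (infoMat f ξ β).det
      = ∑ t ∈ ξ.support.powersetCard m, (∏ x ∈ t, ξ.w x) * detIm f (enumF m t) β := by
  rw [infoMat, det_sum_vecMulVec]
  exact Finset.sum_congr rfl fun t _ => by rw [detIm_eq]

lemma infoMat_det_nonneg (ξ : Design X) (β : ℝ) : 0 ≤ (infoMat f ξ β).det := by
  rw [infoMat_det_expand]
  exact Finset.sum_nonneg fun t _ =>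
    mul_nonneg (Finset.prod_nonneg fun x _ => ξ.w_nonneg x) (detIm_nonneg f _ β)

lemma infoMat_det_lower (ξ : Design X) {t : Finset X} (hsub : t ⊆ ξ.support)
    (hcard : t.card = m) (β : ℝ) :
    (∏ x ∈ t, ξ.w x) * detIm f (enumF m t) β ≤ (infoMat f ξ β).det := by
  rw [infoMat_det_expand]
  exact Finset.single_le_sum
    (f := fun t' => (∏ x ∈ t', ξ.w x) * detIm f (enumF m t') β)
    (fun t' _ => mul_nonneg (Finset.prod_nonneg fun x _ => ξ.w_nonneg x) (detIm_nonneg f _ β))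
    (Finset.mem_powersetCard.mpr ⟨hsub, hcard⟩)

lemma infoMat_det_card_eq (ξ : Design X) (hcard : ξ.support.card = m) (β : ℝ) :
    (infoMat f ξ β).det = (∏ x ∈ ξ.support, ξ.w x) * detIm f (enumF m ξ.support) β := by
  rw [infoMat_det_expand,
    show Finset.powersetCard m ξ.support = {ξ.support} from by
      rw [← hcard]; exact Finset.powersetCard_self _,
    Finset.sum_singleton]

end Aux

lemma key_numeric (d T : ℕ) (c₀ c₁ lam γ : ℝ) (hd : 1 ≤ d) (hT : 1 ≤ T)
    (hc₀ : 0 < c₀) (hc₁ : 0 < c₁) (hlam : 0 < lam) (hγ : (d : ℝ) < γ) :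
    ∃ B₀ : ℝ, 0 < B₀ ∧ ∀ B : ℝ, B₀ ≤ B →
      c₀ * T * c₁ / (B / (2 * ((T : ℝ) + 1))) ^ γ
        < 1 / 2 * (1 / ((⌈B / lam⌉₊ : ℝ) + 1)) ^ d := by
  have hdpos : (0:ℝ) < d := by exact_mod_cast hd
  have hγpos : 0 < γ := lt_trans hdpos hγ
  set c₂ : ℝ := 1/lam + 2 with hc₂
  have hc₂pos : 0 < c₂ := by positivity
  set A : ℝ := c₀ * T * c₁ with hA
  have hTpos : (0:ℝ) < (T:ℝ) := by exact_mod_cast hT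
  have hApos : 0 < A := by positivity
  have hEpos : (0:ℝ) < (2 * ((T:ℝ) + 1)) ^ γ := by positivity
  set C : ℝ := 2 * A * (2 * ((T:ℝ) + 1)) ^ γ * c₂ ^ d with hC
  have hCpos : 0 < C := by positivity
  set ε : ℝ := γ - (d:ℝ) with hε
  have hεpos : 0 < ε := by simp only [hε]; linarith
  have hMpos : (0:ℝ) < max C 1 := lt_max_of_lt_right one_pos
  clear_value c₂ A C ε
  refine ⟨max (max lam 1) ((max C 1) ^ (1/ε) + 1), ?_, ?_⟩
  · have : (0:ℝ) < max lam 1 := lt_max_of_lt_right one_pos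
    exact lt_max_of_lt_left this
  intro B hB
  have hB1 : (1:ℝ) ≤ B := le_trans (le_trans (le_max_right lam 1) (le_max_left _ _)) hB
  have hBlam : lam ≤ B := le_trans (le_trans (le_max_left lam 1) (le_max_left _ _)) hB
  have hBpos : (0:ℝ) < B := lt_of_lt_of_le one_pos hB1
  have hMC : (max C 1) ^ (1/ε) < B :=
    lt_of_lt_of_le (lt_add_one _) (le_trans (le_max_right _ _) hB)
  have h1 : C < B ^ ε := by
    have h2 : ((max C 1) ^ (1/ε)) ^ ε < B ^ ε :=
      Real.rpow_lt_rpow (Real.rpow_nonneg hMpos.le _) hMC hεpos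
    have h3 : ((max C 1) ^ (1/ε)) ^ ε = max C 1 := by
      rw [← Real.rpow_mul hMpos.le, one_div_mul_cancel hεpos.ne', Real.rpow_one]
    have := le_max_left C 1
    linarith
  have hKpos : (0:ℝ) < (⌈B/lam⌉₊ : ℝ) + 1 := by positivity
  have hK : (⌈B/lam⌉₊ : ℝ) + 1 ≤ c₂ * B := by
    have h4 : (⌈B/lam⌉₊ : ℝ) < B/lam + 1 := Nat.ceil_lt_add_one (by positivity)
    have h5 : (2:ℝ) ≤ 2*B := by linarith
    have h6 : c₂ * B = B/lam + 2*B := by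
      rw [hc₂]; field_simp
    rw [h6]
    linarith
  have hBγpos : (0:ℝ) < B ^ γ := Real.rpow_pos_of_pos hBpos γ
  have hCB : C * B ^ (d:ℕ) < B ^ γ := by
    have hBd : B ^ γ = B ^ (d:ℕ) * B ^ ε := by
      rw [← Real.rpow_natCast B d, ← Real.rpow_add hBpos]
      congr 1
      rw [hε]; ring
    have := mul_lt_mul_of_pos_right h1 (pow_pos hBpos d)
    rw [hBd]
    linarith [this]
  have step2 : A / (B / (2*((T:ℝ)+1))) ^ γ < 1/2 * (1/(c₂*B)) ^ d := by
    have hden : (B / (2*((T:ℝ)+1))) ^ γ = B ^ γ / (2*((T:ℝ)+1)) ^ γ :=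
      Real.div_rpow hBpos.le (by positivity : (0:ℝ) ≤ 2*((T:ℝ)+1)) γ
    have hY : 1/2 * (1/(c₂*B)) ^ d = 1 / (2*(c₂*B) ^ d) := by
      rw [div_pow, one_pow]
      ring
    rw [hden, hY, div_div_eq_mul_div, div_lt_div_iff₀ hBγpos (by positivity)]
    have hEq : A * (2*((T:ℝ)+1)) ^ γ * (2*(c₂*B) ^ d) = C * B ^ (d:ℕ) := by
      rw [hC]; ring
    rw [hEq]
    linarith [hCB]
  have step1 : 1/2 * (1/(c₂*B)) ^ d ≤ 1/2 * (1/((⌈B/lam⌉₊:ℝ)+1)) ^ d := by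
    have h7 : 1/(c₂*B) ≤ 1/((⌈B/lam⌉₊:ℝ)+1) := one_div_le_one_div_of_le hKpos hK
    have h8 : (0:ℝ) ≤ 1/(c₂*B) := by positivity
    have := pow_le_pow_left₀ h8 h7 d
    linarith
  exact lt_of_lt_of_le step2 step1

/-- For every `m ≥ 1`, `N`, and constants `c₀, c₁, λ > 0`, `γ > m`, there is `B₀ > 0` such
that for every design problem satisfying (2.4/3.1), (2.5) and (2.9), if
`ℓ(β_max) − ℓ(β_min) ≥ B₀` then any standardized maximin `D`-optimal design has more than
`N` support points. -/
theorem maximin_minimal_support_points_unbounded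
    (m mη : ℕ) (hm : 1 ≤ m) (hmη : mη < m) (N : ℕ) (c₀ c₁ lam γ : ℝ)
    (hc₀ : 0 < c₀) (hc₁ : 0 < c₁) (hlam : 0 < lam) (hγ : (m : ℝ) - (mη : ℝ) < γ) :
    ∃ B₀ : ℝ, 0 < B₀ ∧
      ∀ (X : Type) [Nonempty X] (βmin βmax : ℝ), βmin < βmax →
        ∀ (f : X → ℝ → Fin m → ℝ) (ℓ : ℝ → ℝ) (ξopt : ℝ → Design X),
          -- ℓ is a nondecreasing continuous scale function on ℬ
          MonotoneOn ℓ (Set.Icc βmin βmax) →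
          ContinuousOn ℓ (Set.Icc βmin βmax) →
          -- local D-optimality of the designs ξ[β], with nonsingular information matrix
          (∀ β ∈ Set.Icc βmin βmax, 0 < (infoMat f (ξopt β) β).det) →
          (∀ β ∈ Set.Icc βmin βmax, ∀ ξ : Design X,
              (infoMat f ξ β).det ≤ (infoMat f (ξopt β) β).det) →
          -- condition (2.4)/(3.1):  Q(β,β̃) ≤ c₁ |ℓ(β) − ℓ(β̃)|^(−γ)
          (∀ β ∈ Set.Icc βmin βmax, ∀ b ∈ Set.Icc βmin βmax,
              ((infoMat f (ξopt b) β).det / (infoMat f (ξopt β) β).det)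
                * |ℓ β - ℓ b| ^ γ ≤ c₁) →
          -- condition (2.5):  Q(β,β̃) ≥ 1/2 whenever |ℓ(β) − ℓ(β̃)| ≤ λ
          (∀ β ∈ Set.Icc βmin βmax, ∀ b ∈ Set.Icc βmin βmax,
              |ℓ β - ℓ b| ≤ lam →
              (1 : ℝ) / 2 ≤ (infoMat f (ξopt b) β).det / (infoMat f (ξopt β) β).det) →
          -- condition (2.9)
          (∀ xs : Fin m → X, ∃ b : Fin m → ℝ,
              (∀ j, b j ∈ Set.Icc βmin βmax) ∧
              ∀ β ∈ Set.Icc βmin βmax,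
                detIm f xs β ≤ c₀ * ∑ j, (infoMat f (ξopt (b j)) β).det) →
          -- every local D-optimal design is supported at exactly m points, each of weight 1/m
          (∀ β ∈ Set.Icc βmin βmax, (ξopt β).support.card = m) →
          (∀ β ∈ Set.Icc βmin βmax, ∀ x ∈ (ξopt β).support,
              (ξopt β).w x = 1 / (m : ℝ)) →
          -- there are mη fixed (distinct) points belonging to the support of every ξ[β]
          (∃ xbar : Fin mη → X, Function.Injective xbar ∧
              ∀ β ∈ Set.Icc βmin βmax, ∀ i, xbar i ∈ (ξopt β).support) →
          -- ℓ(β_max) − ℓ(β_min) sufficiently large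
          B₀ ≤ ℓ βmax - ℓ βmin →
          -- any maximizer of the standardized maximin criterion Φ
          ∀ ξstar : Design X,
            (∀ ξ : Design X,
              (⨅ β : Set.Icc βmin βmax,
                  (infoMat f ξ (β : ℝ)).det / (infoMat f (ξopt (β : ℝ)) (β : ℝ)).det) ≤
              (⨅ β : Set.Icc βmin βmax,
                  (infoMat f ξstar (β : ℝ)).det / (infoMat f (ξopt (β : ℝ)) (β : ℝ)).det)) →
            N < ξstar.support.card := by
  classical
  -- abbreviations
  set d : ℕ := m - mη with hd
  have hd1 : 1 ≤ d := by omega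
  set T : ℕ := 2 ^ N * m with hT
  have hT1 : 1 ≤ T := Nat.mul_pos (Nat.two_pow_pos N) hm
  have hγd : (d : ℝ) < γ := by
    have : ((d : ℕ) : ℝ) = (m : ℝ) - (mη : ℝ) := by
      rw [hd]; push_cast [Nat.cast_sub hmη.le]; ring
    rw [this]; exact hγ
  obtain ⟨B₀, hB₀pos, hB₀⟩ := key_numeric d T c₀ c₁ lam γ hd1 hT1 hc₀ hc₁ hlam hγd
  refine ⟨B₀, hB₀pos, ?_⟩
  intro X _ βmin βmax hββ f ℓ ξopt hℓmono hℓcont hpos hopt h24 h25 h29 hsupp hwopt hxb hB ξstar hmax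
  by_contra hcon
  push_neg at hcon
  obtain ⟨xbar, hxbinj, hxbmem⟩ := hxb
  set B : ℝ := ℓ βmax - ℓ βmin with hBdef
  have hBpos : 0 < B := lt_of_lt_of_le hB₀pos hB
  have hminmem : βmin ∈ Set.Icc βmin βmax := ⟨le_refl _, hββ.le⟩
  have hmaxmem : βmax ∈ Set.Icc βmin βmax := ⟨hββ.le, le_refl _⟩
  haveI : Nonempty (Set.Icc βmin βmax) := (Set.nonempty_Icc.mpr hββ.le).to_subtype
  set K : ℕ := ⌈B / lam⌉₊ with hKdef
  -- net
  have hex : ∀ k : Fin (K+1), ∃ b, b ∈ Set.Icc βmin βmax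
      ∧ ℓ b = ℓ βmin + min ((k : ℕ) * lam) B := by
    intro k
    have hy : ℓ βmin + min ((k : ℕ) * lam) B ∈ Set.Icc (ℓ βmin) (ℓ βmax) := by
      constructor
      · have h0 : (0:ℝ) ≤ min (((k : ℕ):ℝ) * lam) B := le_min (by positivity) hBpos.le
        linarith
      · have h1 : min (((k : ℕ):ℝ) * lam) B ≤ B := min_le_right _ _
        have h2 : B = ℓ βmax - ℓ βmin := hBdef
        linarith
    obtain ⟨b, hb1, hb2⟩ := intermediate_value_Icc hββ.le hℓcont hy
    exact ⟨b, hb1, hb2⟩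
  choose βk hβkmem hℓβk using hex
  have hcov : ∀ β ∈ Set.Icc βmin βmax, ∃ k : Fin (K+1), |ℓ β - ℓ (βk k)| ≤ lam := by
    intro β hβm
    have h0 : ℓ βmin ≤ ℓ β := hℓmono hminmem hβm hβm.1
    have h1 : ℓ β ≤ ℓ βmax := hℓmono hβm hmaxmem hβm.2
    set u : ℝ := ℓ β - ℓ βmin with hu
    have hu0 : 0 ≤ u := by rw [hu]; linarith
    have huB : u ≤ B := by rw [hu, hBdef]; linarith
    have hk0K : ⌊u / lam⌋₊ ≤ K := by
      rw [hKdef]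
      have hdiv : u / lam ≤ B / lam := by gcongr
      exact le_trans (Nat.floor_le_floor hdiv) (Nat.floor_le_ceil _)
    refine ⟨⟨⌊u / lam⌋₊, Nat.lt_succ_of_le hk0K⟩, ?_⟩
    rw [hℓβk]
    have hfl : (⌊u / lam⌋₊ : ℝ) * lam ≤ u := by
      have h2 : (⌊u / lam⌋₊ : ℝ) ≤ u / lam := Nat.floor_le (by positivity)
      calc (⌊u / lam⌋₊ : ℝ) * lam ≤ (u / lam) * lam := by nlinarith
        _ = u := div_mul_cancel₀ u hlam.ne'
    have hub : u < (⌊u / lam⌋₊ : ℝ) * lam + lam := by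
      have h3 : u / lam < (⌊u / lam⌋₊ : ℝ) + 1 := Nat.lt_floor_add_one _
      have h5 := mul_lt_mul_of_pos_right h3 hlam
      have h6 : u / lam * lam = u := div_mul_cancel₀ u hlam.ne'
      nlinarith
    rw [show ((((⟨⌊u / lam⌋₊, Nat.lt_succ_of_le hk0K⟩ : Fin (K+1)) : ℕ)) : ℝ)
        = (⌊u / lam⌋₊ : ℝ) from rfl]
    rw [min_eq_left (hfl.trans huB), abs_le]
    have h4 : u = ℓ β - ℓ βmin := hu
    constructor <;> linarith
  -- the mixed design ζ
  obtain ⟨ζ, hζsupp, hζ⟩ : ∃ ζ : Design X,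
      (∀ k : Fin (K+1), (ξopt (βk k)).support ⊆ ζ.support) ∧
      (∀ β ∈ Set.Icc βmin βmax,
        1/2 * (1/((K:ℝ)+1)) ^ d
          ≤ (infoMat f ζ β).det / (infoMat f (ξopt β) β).det) := by
    classical
    have hKR : (0:ℝ) < (K:ℝ) + 1 := by positivity
    have hm0 : (0:ℝ) < m := by exact_mod_cast hm
    set S : Finset X := Finset.biUnion Finset.univ
      (fun k : Fin (K+1) => (ξopt (βk k)).support) with hS
    obtain ⟨ζ0, hζ0supp, hζ0w⟩ : ∃ ζ0 : Design X, ζ0.support = S ∧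
        ζ0.w = fun x => (∑ k : Fin (K+1), (ξopt (βk k)).w x) / ((K:ℝ)+1) := by
      refine ⟨⟨S, fun x => (∑ k : Fin (K+1), (ξopt (βk k)).w x) / ((K:ℝ)+1),
        ?_, ?_, ?_⟩, rfl, rfl⟩
      · intro x hx
        obtain ⟨k, -, hk⟩ := Finset.mem_biUnion.mp hx
        exact div_pos (Finset.sum_pos' (fun j _ => Design.w_nonneg _ x)
          ⟨k, Finset.mem_univ k, (ξopt (βk k)).w_pos x hk⟩) hKR
      · intro x hx
        have hz : ∀ k : Fin (K+1), (ξopt (βk k)).w x = 0 := fun k =>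
          (ξopt (βk k)).w_zero x (fun hmem => hx (Finset.mem_biUnion.mpr ⟨k, Finset.mem_univ k, hmem⟩))
        simp [hz]
      · rw [← Finset.sum_div, Finset.sum_comm]
        have h8 : ∀ k : Fin (K+1), ∑ x ∈ S, (ξopt (βk k)).w x = 1 := by
          intro k
          rw [← (ξopt (βk k)).sum_one]
          exact (Finset.sum_subset (Finset.subset_biUnion_of_mem _ (Finset.mem_univ k))
            (fun x _ hxn => (ξopt (βk k)).w_zero x hxn)).symm
        rw [Finset.sum_congr rfl fun k _ => h8 k, Finset.sum_const, Finset.card_univ,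
          Fintype.card_fin, nsmul_eq_mul]
        push_cast
        field_simp
    refine ⟨ζ0, ?_, ?_⟩
    · intro k
      rw [hζ0supp, hS]
      exact Finset.subset_biUnion_of_mem (fun j : Fin (K+1) => (ξopt (βk j)).support)
        (Finset.mem_univ k)
    · intro β hβm
      obtain ⟨k, hk⟩ := hcov β hβm
      have hbk : βk k ∈ Set.Icc βmin βmax := hβkmem k
      have hcardt : (ξopt (βk k)).support.card = m := hsupp _ hbk
      set t : Finset X := (ξopt (βk k)).support with ht
      have htS : t ⊆ ζ0.support := by
        rw [hζ0supp, hS]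
        exact Finset.subset_biUnion_of_mem (fun j : Fin (K+1) => (ξopt (βk j)).support)
          (Finset.mem_univ k)
      set xI : Finset X := Finset.image xbar Finset.univ with hxI
      have hxIt : xI ⊆ t := Finset.image_subset_iff.mpr fun i _ => hxbmem _ hbk i
      have hwl : ∀ x ∈ t, (if x ∈ xI then 1/(m:ℝ) else 1/(((K:ℝ)+1) * m)) ≤ ζ0.w x := by
        intro x hx
        simp only [hζ0w]
        by_cases hxmem : x ∈ xI
        · rw [if_pos hxmem]
          obtain ⟨i, -, rfl⟩ := Finset.mem_image.mp hxmem
          have h11 : ∀ j : Fin (K+1), (ξopt (βk j)).w (xbar i) = 1/(m:ℝ) := fun j =>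
            hwopt _ (hβkmem j) _ (hxbmem _ (hβkmem j) i)
          rw [Finset.sum_congr rfl fun j _ => h11 j, Finset.sum_const, Finset.card_univ,
            Fintype.card_fin, nsmul_eq_mul]
          push_cast
          rw [mul_comm, mul_div_assoc, div_self hKR.ne', mul_one]
        · rw [if_neg hxmem]
          have h9 : (ξopt (βk k)).w x = 1/(m:ℝ) := hwopt _ hbk _ hx
          have h10 : (1:ℝ)/m ≤ ∑ j : Fin (K+1), (ξopt (βk j)).w x := by
            rw [← h9]
            exact Finset.single_le_sum (f := fun j : Fin (K+1) => (ξopt (βk j)).w x)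
              (fun j _ => Design.w_nonneg _ x) (Finset.mem_univ k)
          rw [show (1:ℝ)/(((K:ℝ)+1) * m) = ((1:ℝ)/m)/((K:ℝ)+1) from by
            rw [div_div, mul_comm]]
          exact (div_le_div_iff_of_pos_right hKR).mpr h10
      have hsplit : ∏ x ∈ t, (if x ∈ xI then 1/(m:ℝ) else 1/(((K:ℝ)+1)*m))
          = (1/(m:ℝ))^mη * (1/(((K:ℝ)+1)*m))^d := by
        rw [Finset.prod_ite, Finset.prod_const, Finset.prod_const]
        have hc1 : (Finset.filter (fun x => x ∈ xI) t).card = mη := by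
          rw [Finset.filter_mem_eq_inter, Finset.inter_eq_right.mpr hxIt, hxI,
            Finset.card_image_of_injective _ hxbinj, Finset.card_univ, Fintype.card_fin]
        have hc2 : (Finset.filter (fun x => ¬ x ∈ xI) t).card = d := by
          have hcc := Finset.card_filter_add_card_filter_not
            (s := t) (fun x => x ∈ xI)
          rw [hc1, hcardt] at hcc
          omega
        rw [hc1, hc2]
      have hprod : (1/(m:ℝ))^mη * (1/(((K:ℝ)+1)*m))^d ≤ ∏ x ∈ t, ζ0.w x := by
        rw [← hsplit]
        refine Finset.prod_le_prod (fun x _ => ?_) hwl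
        split <;> positivity
      have hlb := infoMat_det_lower f ζ0 htS hcardt β
      have heq := infoMat_det_card_eq f (ξopt (βk k)) hcardt β
      have hwprod : ∏ x ∈ t, (ξopt (βk k)).w x = (1/(m:ℝ))^m := by
        rw [Finset.prod_congr rfl (fun x hx => hwopt _ hbk x hx), Finset.prod_const, hcardt]
      have hdetIm0 : 0 ≤ detIm f (enumF m t) β := detIm_nonneg f _ β
      have h3 : (1/((K:ℝ)+1))^d * (infoMat f (ξopt (βk k)) β).det ≤ (infoMat f ζ0 β).det := by
        have hmsplit : ((1:ℝ)/m)^m = (1/(m:ℝ))^mη * (1/(m:ℝ))^d := by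
          rw [← pow_add]
          congr 1
          omega
        calc (1/((K:ℝ)+1))^d * (infoMat f (ξopt (βk k)) β).det
            = ((1/(m:ℝ))^mη * (1/(((K:ℝ)+1)*m))^d) * detIm f (enumF m t) β := by
              rw [heq, hwprod, hmsplit,
                show (1/(((K:ℝ)+1)*m))^d = (1/((K:ℝ)+1))^d * (1/(m:ℝ))^d from by
                  rw [← one_div_mul_one_div, mul_pow]]
              ring
          _ ≤ (∏ x ∈ t, ζ0.w x) * detIm f (enumF m t) β :=
              mul_le_mul_of_nonneg_right hprod hdetIm0
          _ ≤ (infoMat f ζ0 β).det := hlb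
      have hp := hpos β hβm
      have h4 := (le_div_iff₀ hp).mp (h25 β hβm (βk k) hbk hk)
      rw [le_div_iff₀ hp]
      calc 1/2 * (1/((K:ℝ)+1))^d * (infoMat f (ξopt β) β).det
          = (1/((K:ℝ)+1))^d * (1/2 * (infoMat f (ξopt β) β).det) := by ring
        _ ≤ (1/((K:ℝ)+1))^d * (infoMat f (ξopt (βk k)) β).det :=
            mul_le_mul_of_nonneg_left h4 (by positivity)
        _ ≤ (infoMat f ζ0 β).det := h3

  -- lower bound for the optimal value
  have hlow : 1/2 * (1/((K:ℝ)+1)) ^ d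
      ≤ ⨅ β : Set.Icc βmin βmax,
          (infoMat f ξstar (β : ℝ)).det / (infoMat f (ξopt (β : ℝ)) (β : ℝ)).det := by
    have h1 : (1/2 * (1/((K:ℝ)+1)) ^ d : ℝ)
        ≤ ⨅ β : Set.Icc βmin βmax,
            (infoMat f ζ (β : ℝ)).det / (infoMat f (ξopt (β : ℝ)) (β : ℝ)).det :=
      le_ciInf fun β => hζ β.1 β.2
    exact h1.trans (hmax ζ)
  -- upper bound
  set ρ : ℝ := B / (2 * ((T:ℝ)+1)) with hρdef
  have hρpos : 0 < ρ := by positivity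
  have hup : (⨅ β : Set.Icc βmin βmax,
          (infoMat f ξstar (β : ℝ)).det / (infoMat f (ξopt (β : ℝ)) (β : ℝ)).det)
        ≤ c₀ * T * c₁ / ρ ^ γ := by
    classical
    choose bfun hbmem hbineq using h29
    have hPcard : (ξstar.support.powersetCard m).card ≤ 2^N := by
      calc (ξstar.support.powersetCard m).card ≤ ξstar.support.powerset.card :=
            Finset.card_le_card (fun t ht =>
              Finset.mem_powerset.mpr (Finset.mem_powersetCard.mp ht).1)
        _ = 2 ^ ξstar.support.card := Finset.card_powerset _
        _ ≤ 2 ^ N := Nat.pow_le_pow_right (by norm_num) hcon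
    set F : Finset ℝ := (ξstar.support.powersetCard m).biUnion
      (fun t => Finset.image (fun j => ℓ (bfun (enumF m t) j)) Finset.univ) with hF
    have hFcard : F.card ≤ T := by
      calc F.card ≤ ∑ t ∈ ξstar.support.powersetCard m,
            (Finset.image (fun j => ℓ (bfun (enumF m t) j)) Finset.univ).card :=
            Finset.card_biUnion_le
        _ ≤ ∑ _t ∈ ξstar.support.powersetCard m, m :=
            Finset.sum_le_sum (fun t _ => le_trans Finset.card_image_le (by simp))
        _ = (ξstar.support.powersetCard m).card * m := by
            rw [Finset.sum_const, smul_eq_mul]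
        _ ≤ 2^N * m := Nat.mul_le_mul_right _ hPcard
    have hgap : ∃ y ∈ Set.Icc (ℓ βmin) (ℓ βmax), ∀ z ∈ F, ρ ≤ |y - z| := by
      by_contra hcg
      push_neg at hcg
      have hcover : Set.Icc (ℓ βmin) (ℓ βmax) ⊆ ⋃ z ∈ F, Metric.ball z ρ := by
        intro y hy
        obtain ⟨z, hzF, hz⟩ := hcg y hy
        exact Set.mem_biUnion hzF (by rw [Metric.mem_ball, Real.dist_eq]; exact hz)
      have h1 := MeasureTheory.measure_mono (μ := MeasureTheory.volume) hcover
      have h2 := MeasureTheory.measure_biUnion_finset_le (μ := MeasureTheory.volume) F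
        (fun z => Metric.ball z ρ)
      rw [Real.volume_Icc] at h1
      have h4 : ∑ z ∈ F, MeasureTheory.volume (Metric.ball z ρ)
          = (F.card : ENNReal) * ENNReal.ofReal (2*ρ) := by
        rw [Finset.sum_congr rfl (fun z _ => Real.volume_ball z ρ), Finset.sum_const,
          nsmul_eq_mul]
      have h5 : (F.card : ENNReal) * ENNReal.ofReal (2*ρ)
          ≤ (T : ENNReal) * ENNReal.ofReal (2*ρ) := by
        have : (F.card : ENNReal) ≤ (T : ENNReal) := by exact_mod_cast hFcard
        exact mul_le_mul_left this _
      have h6 : (T : ENNReal) * ENNReal.ofReal (2*ρ) = ENNReal.ofReal ((T:ℝ) * (2*ρ)) := by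
        rw [ENNReal.ofReal_mul (by positivity : (0:ℝ) ≤ (T:ℝ)), ENNReal.ofReal_natCast]
      have h7 : ENNReal.ofReal (ℓ βmax - ℓ βmin) ≤ ENNReal.ofReal ((T:ℝ)*(2*ρ)) := by
        calc ENNReal.ofReal (ℓ βmax - ℓ βmin) ≤ _ := h1
          _ ≤ _ := h2
          _ = (F.card : ENNReal) * ENNReal.ofReal (2*ρ) := h4
          _ ≤ (T : ENNReal) * ENNReal.ofReal (2*ρ) := h5
          _ = ENNReal.ofReal ((T:ℝ)*(2*ρ)) := h6
      rw [ENNReal.ofReal_le_ofReal_iff (by positivity)] at h7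
      have h8 : (T:ℝ) * (2*ρ) < B := by
        have h9 : 2*ρ*((T:ℝ)+1) = B := by
          rw [hρdef]
          field_simp
        nlinarith [hρpos]
      rw [← hBdef] at h7
      linarith
    obtain ⟨y, hymem, hygap⟩ := hgap
    obtain ⟨βs, hβsmem, hℓβs⟩ := intermediate_value_Icc hββ.le hℓcont hymem
    have hDpos := hpos βs hβsmem
    have hγpos : 0 < γ := lt_of_le_of_lt (by positivity : (0:ℝ) ≤ (d:ℝ)) hγd
    have hrγpos : (0:ℝ) < ρ ^ γ := Real.rpow_pos_of_pos hρpos γ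
    have hQ : ∀ t ∈ ξstar.support.powersetCard m, ∀ j : Fin m,
        (infoMat f (ξopt (bfun (enumF m t) j)) βs).det
          ≤ (c₁ / ρ^γ) * (infoMat f (ξopt βs) βs).det := by
      intro t ht j
      have hbj := hbmem (enumF m t) j
      have h24' := h24 βs hβsmem _ hbj
      have hzF : ℓ (bfun (enumF m t) j) ∈ F := by
        rw [hF]
        exact Finset.mem_biUnion.mpr ⟨t, ht, Finset.mem_image.mpr ⟨j, Finset.mem_univ j, rfl⟩⟩
      have hρle : ρ ≤ |ℓ βs - ℓ (bfun (enumF m t) j)| := by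
        rw [hℓβs]
        exact hygap _ hzF
      have hΔpos : (0:ℝ) < |ℓ βs - ℓ (bfun (enumF m t) j)| ^ γ :=
        Real.rpow_pos_of_pos (lt_of_lt_of_le hρpos hρle) γ
      have hΔγ : ρ^γ ≤ |ℓ βs - ℓ (bfun (enumF m t) j)|^γ :=
        Real.rpow_le_rpow hρpos.le hρle hγpos.le
      have hq1 : (infoMat f (ξopt (bfun (enumF m t) j)) βs).det / (infoMat f (ξopt βs) βs).det
          ≤ c₁ / |ℓ βs - ℓ (bfun (enumF m t) j)|^γ := (le_div_iff₀ hΔpos).mpr h24'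
      have hq2 : c₁ / |ℓ βs - ℓ (bfun (enumF m t) j)|^γ ≤ c₁ / ρ^γ := by
        gcongr
      exact (div_le_iff₀ hDpos).mp (hq1.trans hq2)
    have hsum : (infoMat f ξstar βs).det
        ≤ c₀ * T * c₁ / ρ^γ * (infoMat f (ξopt βs) βs).det := by
      rw [infoMat_det_expand f ξstar βs]
      calc ∑ t ∈ ξstar.support.powersetCard m, (∏ x ∈ t, ξstar.w x) * detIm f (enumF m t) βs
          ≤ ∑ t ∈ ξstar.support.powersetCard m, detIm f (enumF m t) βs := by
            refine Finset.sum_le_sum fun t _ => ?_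
            exact mul_le_of_le_one_left (detIm_nonneg f (enumF m t) βs)
              (Finset.prod_le_one (fun x _ => ξstar.w_nonneg x) (fun x _ => ξstar.w_le_one x))
        _ ≤ ∑ t ∈ ξstar.support.powersetCard m,
              (c₀ * ∑ j, (infoMat f (ξopt (bfun (enumF m t) j)) βs).det) :=
            Finset.sum_le_sum fun t _ => hbineq (enumF m t) βs hβsmem
        _ ≤ ∑ _t ∈ ξstar.support.powersetCard m,
              (c₀ * ((m:ℝ) * ((c₁ / ρ^γ) * (infoMat f (ξopt βs) βs).det))) := by
            refine Finset.sum_le_sum fun t ht => ?_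
            have hin : ∑ j : Fin m, (infoMat f (ξopt (bfun (enumF m t) j)) βs).det
                ≤ (m:ℝ) * ((c₁ / ρ^γ) * (infoMat f (ξopt βs) βs).det) := by
              have hss := Finset.sum_le_sum (s := (Finset.univ : Finset (Fin m)))
                (f := fun j => (infoMat f (ξopt (bfun (enumF m t) j)) βs).det)
                (g := fun _ => (c₁ / ρ^γ) * (infoMat f (ξopt βs) βs).det)
                (fun j _ => hQ t ht j)
              rwa [Finset.sum_const, Finset.card_univ, Fintype.card_fin, nsmul_eq_mul] at hss
            exact mul_le_mul_of_nonneg_left hin hc₀.le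
        _ = ((ξstar.support.powersetCard m).card : ℝ)
              * (c₀ * ((m:ℝ) * ((c₁ / ρ^γ) * (infoMat f (ξopt βs) βs).det))) := by
            rw [Finset.sum_const, nsmul_eq_mul]
        _ ≤ ((2:ℝ)^N) * (c₀ * ((m:ℝ) * ((c₁ / ρ^γ) * (infoMat f (ξopt βs) βs).det))) := by
            refine mul_le_mul_of_nonneg_right ?_ (by positivity)
            exact_mod_cast hPcard
        _ = c₀ * T * c₁ / ρ^γ * (infoMat f (ξopt βs) βs).det := by
            rw [hT]
            push_cast
            ring
    refine le_trans (ciInf_le ?_ ⟨βs, hβsmem⟩) ?_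
    · refine ⟨0, ?_⟩
      rintro v ⟨β', rfl⟩
      exact div_nonneg (infoMat_det_nonneg f ξstar _) (hpos _ β'.2).le
    · exact (div_le_iff₀ hDpos).mpr (by linarith [hsum])
  have := hB₀ B hB
  rw [← hρdef, ← hKdef] at this
  linarith
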